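/- Let G(x) = ∫₀ˣ a(s) s^{2n+1} ds with a continuous and 0 < m ≤ a ≤ M. For h > 0 define I(h) = 2√2 ∫_{x₋(h)}^{x₊(h)} √(h − G(x)) dx, where G(x₋(h)) = G(x₊(h)) = h, x₋(h) < 0 < x₊(h). Then there exist constants c₁, c₂ > 0 and h₀ > 0 such that for all h ≥ h₀, c₁ h^{1/2 + 1/(2n+2)} ≤ I(h) ≤ c₂ h^{1/2 + 1/(2n+2)}. -/

import Mathlib

open MeasureTheory intervalIntegral

theorem stmt_7 (n : ℕ) (hn : 1 ≤ n) (a : ℝ → ℝ) (hcont : Continuous a)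
    (m M : ℝ) (hm : 0 < m) (hmM : m ≤ M)
    (hbound : ∀ s : ℝ, m ≤ a s ∧ a s ≤ M)
    (G : ℝ → ℝ) (hG : ∀ x : ℝ, G x = ∫ s in (0:ℝ)..x, a s * s ^ (2 * n + 1))
    (xp xm : ℝ → ℝ)
    (hxp : ∀ h : ℝ, 0 < h → 0 < xp h ∧ G (xp h) = h)
    (hxm : ∀ h : ℝ, 0 < h → xm h < 0 ∧ G (xm h) = h)
    (I : ℝ → ℝ)
    (hI : ∀ h : ℝ, 0 < h →
      I h = 2 * Real.sqrt 2 * ∫ x in (xm h)..(xp h), Real.sqrt (h - G x)) :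
    ∃ c₁ > (0:ℝ), ∃ c₂ > (0:ℝ), ∃ h₀ > (0:ℝ), ∀ h : ℝ, h₀ ≤ h →
      c₁ * h ^ ((1:ℝ) / 2 + 1 / (2 * n + 2)) ≤ I h ∧
      I h ≤ c₂ * h ^ ((1:ℝ) / 2 + 1 / (2 * n + 2)) := by
  have hM : (0:ℝ) < M := lt_of_lt_of_le hm hmM
  have hf : Continuous fun s : ℝ => a s * s ^ (2*n+1) := hcont.mul (continuous_pow _)
  have hGc : Continuous G := by
    have h1 : Continuous fun x : ℝ => ∫ s in (0:ℝ)..x, a s * s ^ (2*n+1) :=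
      intervalIntegral.continuous_primitive (fun u v => hf.intervalIntegrable u v) 0
    have : G = fun x : ℝ => ∫ s in (0:ℝ)..x, a s * s ^ (2*n+1) := funext hG
    rw [this]; exact h1
  have hNnat : (2*n+2 : ℕ) ≠ 0 := by omega
  have hN : (0:ℝ) < ((2*n+2 : ℕ):ℝ) := by positivity
  have heven : Even (2*n+2) := ⟨n+1, by ring⟩
  have hodd : Odd (2*n+1) := ⟨n, by ring⟩
  -- key bounds on G
  have key : ∀ x : ℝ, m * x ^ (2*n+2) / ((2*n+2:ℕ):ℝ) ≤ G x ∧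
      G x ≤ M * x ^ (2*n+2) / ((2*n+2:ℕ):ℝ) := by
    intro x
    have hmint : ∀ (c : ℝ) (u v : ℝ), ∫ s in u..v, c * s ^ (2*n+1) =
        c * (v ^ (2*n+2) - u ^ (2*n+2)) / ((2*n+2:ℕ):ℝ) := by
      intro c u v
      rw [intervalIntegral.integral_const_mul, integral_pow]
      push_cast; ring
    have hci : ∀ (c : ℝ) (u v : ℝ),
        IntervalIntegrable (fun s => c * s ^ (2*n+1)) volume u v :=
      fun c u v => (continuous_const.mul (continuous_pow _)).intervalIntegrable u v
    rcases le_or_gt 0 x with hx | hx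
    · constructor
      · have h1 : ∫ s in (0:ℝ)..x, m * s ^ (2*n+1) ≤ ∫ s in (0:ℝ)..x, a s * s ^ (2*n+1) := by
          apply intervalIntegral.integral_mono_on hx (hci m 0 x) (hf.intervalIntegrable _ _)
          intro s hs
          exact mul_le_mul_of_nonneg_right (hbound s).1 (pow_nonneg hs.1 _)
        rw [hmint] at h1
        rw [hG x]
        calc m * x ^ (2*n+2) / ((2*n+2:ℕ):ℝ) = m * (x ^ (2*n+2) - 0 ^ (2*n+2)) / ((2*n+2:ℕ):ℝ) := by
              rw [zero_pow hNnat]; ring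
          _ ≤ _ := h1
      · have h1 : ∫ s in (0:ℝ)..x, a s * s ^ (2*n+1) ≤ ∫ s in (0:ℝ)..x, M * s ^ (2*n+1) := by
          apply intervalIntegral.integral_mono_on hx (hf.intervalIntegrable _ _) (hci M 0 x)
          intro s hs
          exact mul_le_mul_of_nonneg_right (hbound s).2 (pow_nonneg hs.1 _)
        rw [hmint] at h1
        rw [hG x]
        calc (∫ s in (0:ℝ)..x, a s * s ^ (2*n+1)) ≤ M * (x ^ (2*n+2) - 0 ^ (2*n+2)) / ((2*n+2:ℕ):ℝ) := h1
          _ = M * x ^ (2*n+2) / ((2*n+2:ℕ):ℝ) := by rw [zero_pow hNnat]; ring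
    · have hsym : G x = -∫ s in x..(0:ℝ), a s * s ^ (2*n+1) := by
        rw [hG x, intervalIntegral.integral_symm]
      constructor
      · have h1 : ∫ s in x..(0:ℝ), a s * s ^ (2*n+1) ≤ ∫ s in x..(0:ℝ), m * s ^ (2*n+1) := by
          apply intervalIntegral.integral_mono_on hx.le (hf.intervalIntegrable _ _) (hci m x 0)
          intro s hs
          exact mul_le_mul_of_nonpos_right (hbound s).1 (hodd.pow_nonpos hs.2)
        rw [hmint] at h1
        rw [hsym]
        have : m * ((0:ℝ) ^ (2*n+2) - x ^ (2*n+2)) / ((2*n+2:ℕ):ℝ)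
            = -(m * x ^ (2*n+2) / ((2*n+2:ℕ):ℝ)) := by rw [zero_pow hNnat]; ring
        rw [this] at h1
        linarith
      · have h1 : ∫ s in x..(0:ℝ), M * s ^ (2*n+1) ≤ ∫ s in x..(0:ℝ), a s * s ^ (2*n+1) := by
          apply intervalIntegral.integral_mono_on hx.le (hci M x 0) (hf.intervalIntegrable _ _)
          intro s hs
          exact mul_le_mul_of_nonpos_right (hbound s).2 (hodd.pow_nonpos hs.2)
        rw [hmint] at h1
        rw [hsym]
        have : M * ((0:ℝ) ^ (2*n+2) - x ^ (2*n+2)) / ((2*n+2:ℕ):ℝ)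
            = -(M * x ^ (2*n+2) / ((2*n+2:ℕ):ℝ)) := by rw [zero_pow hNnat]; ring
        rw [this] at h1
        linarith
  have hGnonneg : ∀ x : ℝ, 0 ≤ G x := by
    intro x
    have := (key x).1
    have h2 : 0 ≤ x ^ (2*n+2) := heven.pow_nonneg x
    have : 0 ≤ m * x ^ (2*n+2) / ((2*n+2:ℕ):ℝ) := by positivity
    linarith [(key x).1]
  -- constants
  set e : ℝ := (((2*n+2:ℕ):ℝ))⁻¹ with he
  have he_pos : 0 < e := by positivity
  set K : ℝ := (((2*n+2:ℕ):ℝ)/m) ^ e with hK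
  set L : ℝ := (((2*n+2:ℕ):ℝ)/M) ^ e with hL
  set θ : ℝ := (m/(2*M)) ^ e with hθ
  have hKpos : 0 < K := Real.rpow_pos_of_pos (by positivity) _
  have hLpos : 0 < L := Real.rpow_pos_of_pos (by positivity) _
  have hθpos : 0 < θ := Real.rpow_pos_of_pos (by positivity) _
  have hθ1 : θ ≤ 1 := Real.rpow_le_one (by positivity)
    (by rw [div_le_one (by positivity)]; linarith) he_pos.le
  have hexp : (1:ℝ) / 2 + 1 / (2 * (n:ℝ) + 2) = 1/2 + e := by
    rw [he]; push_cast; ring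
  refine ⟨Real.sqrt 2 * θ * L, by positivity, 2 * Real.sqrt 2 * 2 * K, by positivity,
    1, one_pos, ?_⟩
  intro h hh
  have hh0 : (0:ℝ) < h := lt_of_lt_of_le one_pos hh
  obtain ⟨hxp0, hGxp⟩ := hxp h hh0
  obtain ⟨hxm0, hGxm⟩ := hxm h hh0
  have hle : xm h ≤ xp h := hxm0.le.trans hxp0.le
  have hFc : Continuous fun x : ℝ => Real.sqrt (h - G x) :=
    (continuous_const.sub hGc).sqrt
  have hFint : ∀ u v : ℝ, IntervalIntegrable (fun x => Real.sqrt (h - G x)) volume u v :=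
    fun u v => hFc.intervalIntegrable u v
  -- bounds on xp, xm
  have hxpow : ∀ x : ℝ, G x = h → x ^ (2*n+2) ≤ ((2*n+2:ℕ):ℝ)/m * h := by
    intro x hGx
    have h1 := (key x).1
    rw [hGx] at h1
    rw [div_mul_eq_mul_div, le_div_iff₀ hm]
    have := (div_le_iff₀ hN).mp h1
    linarith
  have hxp_ub : xp h ≤ K * h ^ e := by
    calc xp h = ((xp h) ^ (2*n+2)) ^ e := (Real.pow_rpow_inv_natCast hxp0.le hNnat).symm
      _ ≤ (((2*n+2:ℕ):ℝ)/m * h) ^ e :=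
          Real.rpow_le_rpow (heven.pow_nonneg _) (hxpow _ hGxp) he_pos.le
      _ = K * h ^ e := Real.mul_rpow (by positivity) hh0.le
  have hxm_ub : -xm h ≤ K * h ^ e := by
    calc -xm h = ((-xm h) ^ (2*n+2)) ^ e :=
          (Real.pow_rpow_inv_natCast (by linarith) hNnat).symm
      _ = ((xm h) ^ (2*n+2)) ^ e := by rw [heven.neg_pow]
      _ ≤ (((2*n+2:ℕ):ℝ)/m * h) ^ e :=
          Real.rpow_le_rpow (heven.pow_nonneg _) (hxpow _ hGxm) he_pos.le
      _ = K * h ^ e := Real.mul_rpow (by positivity) hh0.le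
  have hxp_lb : L * h ^ e ≤ xp h := by
    have h1 := (key (xp h)).2
    rw [hGxp] at h1
    have h2 : ((2*n+2:ℕ):ℝ)/M * h ≤ (xp h) ^ (2*n+2) := by
      rw [div_mul_eq_mul_div, div_le_iff₀ hM]
      have h3 := (le_div_iff₀ hN).mp h1
      linarith
    calc L * h ^ e = (((2*n+2:ℕ):ℝ)/M * h) ^ e := (Real.mul_rpow (by positivity) hh0.le).symm
      _ ≤ ((xp h) ^ (2*n+2)) ^ e := Real.rpow_le_rpow (by positivity) h2 he_pos.le
      _ = xp h := Real.pow_rpow_inv_natCast hxp0.le hNnat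
  have hrw : h ^ ((1:ℝ)/2 + 1/(2*(n:ℝ)+2)) = h ^ ((1:ℝ)/2) * h ^ e := by
    rw [hexp, Real.rpow_add hh0]
  have hsq : Real.sqrt h = h ^ ((1:ℝ)/2) := Real.sqrt_eq_rpow h
  constructor
  · -- lower bound
    set b : ℝ := θ * xp h with hb
    have hb0 : 0 ≤ b := by positivity
    have hbxp : b ≤ xp h := by
      calc b = θ * xp h := rfl
        _ ≤ 1 * xp h := mul_le_mul_of_nonneg_right hθ1 hxp0.le
        _ = xp h := one_mul _
    have hGb : ∀ x ∈ Set.Icc (0:ℝ) b, G x ≤ h/2 := by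
      intro x hx
      have h1 := (key x).2
      have h2 : x ^ (2*n+2) ≤ b ^ (2*n+2) := pow_le_pow_left₀ hx.1 hx.2 _
      have h3 : b ^ (2*n+2) = (m/(2*M)) * (xp h) ^ (2*n+2) := by
        rw [hb, mul_pow, hθ, Real.rpow_inv_natCast_pow (by positivity) hNnat]
      have h4 : (xp h) ^ (2*n+2) ≤ ((2*n+2:ℕ):ℝ)/m * h := hxpow _ hGxp
      have h5 : b ^ (2*n+2) ≤ (m/(2*M)) * (((2*n+2:ℕ):ℝ)/m * h) := by
        rw [h3]
        exact mul_le_mul_of_nonneg_left h4 (by positivity)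
      have h6 : (m/(2*M)) * (((2*n+2:ℕ):ℝ)/m * h) = ((2*n+2:ℕ):ℝ) * h / (2*M) := by
        field_simp
      have h7 : M * x ^ (2*n+2) / ((2*n+2:ℕ):ℝ) ≤ h/2 := by
        rw [div_le_iff₀ hN]
        have h8 : M * x ^ (2*n+2) ≤ M * (((2*n+2:ℕ):ℝ) * h / (2*M)) := by
          apply mul_le_mul_of_nonneg_left _ hM.le
          calc x ^ (2*n+2) ≤ b ^ (2*n+2) := h2
            _ ≤ ((2*n+2:ℕ):ℝ) * h / (2*M) := by rw [← h6]; exact h5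
        have h9 : M * (((2*n+2:ℕ):ℝ) * h / (2*M)) = h/2 * ((2*n+2:ℕ):ℝ) := by
          field_simp
        linarith
      linarith
    have hint1 : ∫ x in (0:ℝ)..b, Real.sqrt (h/2) ≤
        ∫ x in (0:ℝ)..b, Real.sqrt (h - G x) := by
      apply intervalIntegral.integral_mono_on hb0 (intervalIntegrable_const) (hFint 0 b)
      intro x hx
      apply Real.sqrt_le_sqrt
      linarith [hGb x hx]
    have hint1' : b * Real.sqrt (h/2) ≤ ∫ x in (0:ℝ)..b, Real.sqrt (h - G x) := by
      have : ∫ x in (0:ℝ)..b, Real.sqrt (h/2) = b * Real.sqrt (h/2) := by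
        rw [intervalIntegral.integral_const, smul_eq_mul, sub_zero]
      linarith [hint1, this.symm.le]
    have hsplit : (∫ x in (xm h)..(0:ℝ), Real.sqrt (h - G x)) +
        ((∫ x in (0:ℝ)..b, Real.sqrt (h - G x)) +
         (∫ x in b..(xp h), Real.sqrt (h - G x))) =
        ∫ x in (xm h)..(xp h), Real.sqrt (h - G x) := by
      rw [intervalIntegral.integral_add_adjacent_intervals (hFint 0 b) (hFint b (xp h))]
      exact intervalIntegral.integral_add_adjacent_intervals (hFint _ 0) (hFint 0 _)
    have hnn1 : 0 ≤ ∫ x in (xm h)..(0:ℝ), Real.sqrt (h - G x) :=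
      intervalIntegral.integral_nonneg hxm0.le (fun x _ => Real.sqrt_nonneg _)
    have hnn2 : 0 ≤ ∫ x in b..(xp h), Real.sqrt (h - G x) :=
      intervalIntegral.integral_nonneg hbxp (fun x _ => Real.sqrt_nonneg _)
    have hmain : b * Real.sqrt (h/2) ≤ ∫ x in (xm h)..(xp h), Real.sqrt (h - G x) := by
      linarith
    have hsqrt2 : Real.sqrt h / 2 ≤ Real.sqrt (h/2) := by
      rw [Real.sqrt_div hh0.le]
      apply div_le_div_of_nonneg_left (Real.sqrt_nonneg h) (Real.sqrt_pos.mpr two_pos)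
      nlinarith [Real.sq_sqrt (by norm_num : (0:ℝ) ≤ 2), Real.sqrt_nonneg 2]
    have hblb : θ * (L * h ^ e) ≤ b := mul_le_mul_of_nonneg_left hxp_lb hθpos.le
    have hchain : θ * (L * h ^ e) * (Real.sqrt h / 2) ≤ b * Real.sqrt (h/2) := by
      apply mul_le_mul hblb hsqrt2 (by positivity) hb0
    rw [hI h hh0, hrw, ← hsq]
    have h2s : (0:ℝ) < Real.sqrt 2 := Real.sqrt_pos.mpr two_pos
    calc Real.sqrt 2 * θ * L * (Real.sqrt h * h ^ e)
        = (2 * Real.sqrt 2) * (θ * (L * h ^ e) * (Real.sqrt h / 2)) := by ring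
      _ ≤ (2 * Real.sqrt 2) * (b * Real.sqrt (h/2)) := by
          apply mul_le_mul_of_nonneg_left hchain (by positivity)
      _ ≤ 2 * Real.sqrt 2 * ∫ x in (xm h)..(xp h), Real.sqrt (h - G x) := by
          apply mul_le_mul_of_nonneg_left hmain (by positivity)
  · -- upper bound
    have hub : ∫ x in (xm h)..(xp h), Real.sqrt (h - G x) ≤
        (xp h - xm h) * Real.sqrt h := by
      have h1 : ∫ x in (xm h)..(xp h), Real.sqrt (h - G x) ≤
          ∫ x in (xm h)..(xp h), Real.sqrt h := by
        apply intervalIntegral.integral_mono_on hle (hFint _ _) intervalIntegrable_const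
        intro x _
        apply Real.sqrt_le_sqrt
        linarith [hGnonneg x]
      have h2 : ∫ x in (xm h)..(xp h), Real.sqrt h = (xp h - xm h) * Real.sqrt h := by
        simp [intervalIntegral.integral_const, smul_eq_mul]
      linarith
    have hwidth : xp h - xm h ≤ 2 * (K * h ^ e) := by linarith
    rw [hI h hh0, hrw, ← hsq]
    calc 2 * Real.sqrt 2 * ∫ x in (xm h)..(xp h), Real.sqrt (h - G x)
        ≤ 2 * Real.sqrt 2 * ((xp h - xm h) * Real.sqrt h) :=
          mul_le_mul_of_nonneg_left hub (by positivity)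
      _ ≤ 2 * Real.sqrt 2 * (2 * (K * h ^ e) * Real.sqrt h) := by
          apply mul_le_mul_of_nonneg_left _ (by positivity)
          exact mul_le_mul_of_nonneg_right hwidth (Real.sqrt_nonneg h)
      _ = 2 * Real.sqrt 2 * 2 * K * (Real.sqrt h * h ^ e) := by ring
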